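/- The linear layer L_{k→l} defined by L(A)_j = Σ_μ Σ_i B^μ_{i,j} A_i w_μ + Σ_λ C^λ_j b_λ is permutation equivariant: L(π·A)_j = L(A)_{π^{-1}(j)} for all permutations π ∈ S_n, tensors A ∈ R^{n^k × d}, and j ∈ [n]^l. -/

import Mathlib

/-- The equivariant linear layer `L(A)_j = Σ_μ Σ_i B^μ_{i,j} A_i w_μ + Σ_λ C^λ_j b_λ`
is permutation equivariant.  Since each pair `(i,j)` (resp. each `j`) lies in exactly
one orbit `μ` (resp. `λ`), the double sum over orbits is expressed via a weight
assignment `w` on `[n]^(k+l)` (resp. a bias assignment `b` on `[n]^l`) that is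
constant on orbits: `L(A)_j = Σ_i A_i · w(i,j) + b(j)`, and the theorem states
`L(π·A)_j = L(A)_{π⁻¹(j)}`. -/
theorem linear_layer_equivariant (n k l d d' : ℕ)
    (w : (Fin (k + l) → Fin n) → Matrix (Fin d) (Fin d') ℝ)
    (hw : ∀ (π : Equiv.Perm (Fin n)) (x : Fin (k + l) → Fin n),
      w (fun a => π (x a)) = w x)
    (b : (Fin l → Fin n) → Fin d' → ℝ)
    (hb : ∀ (π : Equiv.Perm (Fin n)) (j : Fin l → Fin n),
      b (fun a => π (j a)) = b j)
    (L : ((Fin k → Fin n) → Fin d → ℝ) → (Fin l → Fin n) → Fin d' → ℝ)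
    (hL : ∀ (A : (Fin k → Fin n) → Fin d → ℝ) (j : Fin l → Fin n),
      L A j = (∑ i : Fin k → Fin n, Matrix.vecMul (A i) (w (Fin.append i j))) + b j)
    (π : Equiv.Perm (Fin n)) (A : (Fin k → Fin n) → Fin d → ℝ) (j : Fin l → Fin n) :
    L (fun i => A (fun a => π⁻¹ (i a))) j = L A (fun a => π⁻¹ (j a)) := by
  rw [hL, hL]
  congr 1
  · rw [← Equiv.sum_comp (Equiv.piCongrRight fun _ : Fin k => π)
      (fun i => Matrix.vecMul (A fun a => π⁻¹ (i a)) (w (Fin.append i j)))]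
    refine Finset.sum_congr rfl fun i _ => ?_
    have h1 : (fun a => π⁻¹ ((Equiv.piCongrRight fun _ : Fin k => π) i a)) = i := by
      funext a; simp
    have h2 : Fin.append ((Equiv.piCongrRight fun _ : Fin k => π) i) j
        = fun a => π (Fin.append i (fun a => π⁻¹ (j a)) a) := by
      funext a
      refine Fin.addCases (fun p => ?_) (fun p => ?_) a <;>
        simp [Fin.append_left, Fin.append_right]
    rw [h1, h2, hw]
  · nth_rewrite 1 [show j = fun a => π (π⁻¹ (j a)) from
      funext fun a => (Equiv.apply_symm_apply π (j a)).symm]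
    exact hb π _
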